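/- arXiv:2009.03167 — 2 statements merged into one kernel-verified Lean document; each statement's English description precedes it below -/
import Mathlib

section
/- Pointwise admissibility of e-values (sufficiency): if (𝔢_t)_{t∈ℕ₀} is a nonnegative martingale under Q with E_Q[𝔢_0] = 1, then (𝔢_t) is an admissible e-value for Q: it satisfies E_Q[𝔢_τ] ≤ 1 for all stopping times τ, and any other process (𝔢'_t) with E_Q[𝔢'_τ] ≤ 1 for all stopping times τ and 𝔢'_t ≥ 𝔢_t Q-a.s. for all t must satisfy 𝔢'_t = 𝔢_t Q-a.s. for all t. -/
open MeasureTheory Filter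
open scoped ENNReal NNReal Topology

/-- Value of a process `f` at a possibly infinite stopping time `τ`, with value at `∞`
given by `limsup` (so `𝔢_∞ := limsup 𝔢_t`). -/
noncomputable def stopVal {Ω : Type*} (f : ℕ → Ω → ℝ) (τ : Ω → ℕ∞) (ω : Ω) : ℝ :=
  if h : τ ω = ⊤ then Filter.limsup (fun t => f t ω) Filter.atTop
  else f ((τ ω).untop h) ω

/-- A possibly infinite stopping time with respect to `ℱ`. -/
def IsENatStoppingTime {Ω : Type*} {m0 : MeasurableSpace Ω} (ℱ : Filtration ℕ m0)
    (τ : Ω → ℕ∞) : Prop :=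
  ∀ t : ℕ, MeasurableSet[ℱ t] {ω | τ ω ≤ (t : ℕ∞)}

/-- Pointwise admissibility of e-values (sufficiency): a nonnegative martingale `(𝔢_t)`
with `E[𝔢_0] = 1` is an admissible e-value: it satisfies `E[𝔢_τ] ≤ 1` for all (possibly
infinite) stopping times, and any e-value dominating it a.s. coincides with it a.s. -/
theorem e_value_admissible_of_martingale {Ω : Type*} {m0 : MeasurableSpace Ω}
    (μ : Measure Ω) [IsProbabilityMeasure μ] (ℱ : Filtration ℕ m0)
    (e : ℕ → Ω → ℝ) (hM : Martingale e ℱ μ) (hpos : ∀ t ω, 0 ≤ e t ω)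
    (h1 : ∫ ω, e 0 ω ∂μ = 1) :
    (∀ τ : Ω → ℕ∞, IsENatStoppingTime ℱ τ →
      ∫⁻ ω, ENNReal.ofReal (stopVal e τ ω) ∂μ ≤ 1) ∧
    (∀ e' : ℕ → Ω → ℝ, Adapted ℱ e' →
      (∀ τ : Ω → ℕ∞, IsENatStoppingTime ℱ τ →
        ∫⁻ ω, ENNReal.ofReal (stopVal e' τ ω) ∂μ ≤ 1) →
      (∀ t, e t ≤ᵐ[μ] e' t) → ∀ t, e' t =ᵐ[μ] e t) := by
  have hint : ∀ n, Integrable (e n) μ := hM.integrable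
  -- constant expectation
  have hIeq : ∀ n, ∫ ω, e n ω ∂μ = 1 := by
    intro n
    have := hM.setIntegral_eq (i := 0) (j := n) (Nat.zero_le n)
      (s := Set.univ) MeasurableSet.univ
    simpa [Measure.restrict_univ, h1] using this.symm
  have hLeq : ∀ n, ∫⁻ ω, ENNReal.ofReal (e n ω) ∂μ = 1 := by
    intro n
    rw [← ofReal_integral_eq_lintegral_ofReal (hint n) (ae_of_all _ (hpos n)), hIeq n]
    simp
  -- L¹ boundedness
  have hbdd1 : ∀ n, eLpNorm (e n) 1 μ ≤ ((1 : ℝ≥0) : ℝ≥0∞) := by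
    intro n
    rw [eLpNorm_one_eq_lintegral_enorm]
    have h : ∀ ω, (‖e n ω‖ₑ : ℝ≥0∞) = ENNReal.ofReal (e n ω) := fun ω =>
      Real.enorm_eq_ofReal (hpos n ω)
    simp only [h, hLeq n]
    simp
  have hconv : ∀ᵐ ω ∂μ, Tendsto (fun n => e n ω) atTop (𝓝 (ℱ.limitProcess e μ ω)) :=
    hM.submartingale.ae_tendsto_limitProcess hbdd1
  constructor
  · -- Part 1
    intro τ hτ
    -- the truncated stopping times
    set σ : ℕ → Ω → ℕ := fun n ω => (min (τ ω) n).toNat with hσ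
    have hσ_le : ∀ n ω, σ n ω ≤ n := fun n ω =>
      ENat.toNat_le_of_le_coe (min_le_right _ _)
    have hσ_eq_top : ∀ (n : ℕ) (ω), τ ω = ⊤ → σ n ω = n := by
      intro n ω h; simp only [hσ]; rw [h]; simp
    have hσ_eq : ∀ (n : ℕ) (ω) (k : ℕ), τ ω = k → k ≤ n → σ n ω = k := by
      intro n ω k hk hkn
      simp only [hσ]; rw [hk]
      rw [min_eq_left (by exact_mod_cast hkn : (k : ℕ∞) ≤ n)]
      simp
    have hσ_st0 : ∀ n (i : ℕ), MeasurableSet[ℱ i] {ω | σ n ω ≤ i} := by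
      intro n i
      by_cases hni : n ≤ i
      · have h : {ω | σ n ω ≤ i} = Set.univ := by
          ext ω; simp only [Set.mem_setOf_eq, Set.mem_univ, iff_true]
          exact le_trans (hσ_le n ω) hni
        rw [h]; exact @MeasurableSet.univ Ω (ℱ i)
      · have h : {ω | σ n ω ≤ i} = {ω | τ ω ≤ (i : ℕ∞)} := by
          ext ω
          simp only [Set.mem_setOf_eq]
          constructor
          · intro h
            rcases eq_or_ne (τ ω) ⊤ with ht | ht
            · exact absurd ((hσ_eq_top n ω ht) ▸ h) hni
            · have hne : min (τ ω) (n : ℕ∞) ≠ ⊤ := by simp [ht]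
              have h2 : min (τ ω) (n : ℕ∞) ≤ (i : ℕ∞) := by
                rw [← ENat.coe_toNat hne]
                exact_mod_cast h
              rcases min_le_iff.1 h2 with h3 | h3
              · exact h3
              · exact absurd (by exact_mod_cast h3) hni
          · intro h
            have : min (τ ω) (n : ℕ∞) ≤ (i : ℕ∞) := le_trans (min_le_left _ _) h
            exact ENat.toNat_le_of_le_coe this
        rw [h]; exact hτ i
    have hσ_st : ∀ n, IsStoppingTime ℱ (fun ω => (σ n ω : WithTop ℕ)) := fun n i => by
      convert hσ_st0 n i using 2; ext ω; exact WithTop.coe_le_coe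
    -- expectation of the stopped values is 1
    have hIstop : ∀ n, ∫ ω, stoppedValue e (fun ω => (σ n ω : WithTop ℕ)) ω ∂μ = 1 := by
      intro n
      have h0 : stoppedValue e (fun _ => (WithTop.some (0 : ℕ) : WithTop ℕ)) = e 0 := rfl
      have hle1 := hM.submartingale.expected_stoppedValue_mono (isStoppingTime_const ℱ 0)
          (hσ_st n) (fun ω => WithTop.coe_le_coe.2 (Nat.zero_le _))
          (fun ω => WithTop.coe_le_coe.2 (hσ_le n ω))
      have hle2 := hM.neg.submartingale.expected_stoppedValue_mono (isStoppingTime_const ℱ 0)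
          (hσ_st n) (fun ω => WithTop.coe_le_coe.2 (Nat.zero_le _))
          (fun ω => WithTop.coe_le_coe.2 (hσ_le n ω))
      have hneg : stoppedValue (-e) (fun ω => (σ n ω : WithTop ℕ)) = -(stoppedValue e (fun ω => (σ n ω : WithTop ℕ))) := rfl
      have hneg0 : stoppedValue (-e) (fun _ => (WithTop.some (0 : ℕ) : WithTop ℕ)) = -(e 0) := rfl
      rw [hneg, hneg0] at hle2
      simp only [Pi.neg_apply] at hle2
      rw [integral_neg, integral_neg, neg_le_neg_iff] at hle2
      rw [h0, h1] at hle1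
      rw [h1] at hle2
      exact le_antisymm hle2 hle1
    have hint_stop : ∀ n, Integrable (stoppedValue e (fun ω => (σ n ω : WithTop ℕ))) μ := fun n =>
      integrable_stoppedValue ℕ (hσ_st n) hint (fun ω => WithTop.coe_le_coe.2 (hσ_le n ω))
    have hLstop : ∀ n, ∫⁻ ω, ENNReal.ofReal (stoppedValue e (fun ω => (σ n ω : WithTop ℕ)) ω) ∂μ = 1 := by
      intro n
      rw [← ofReal_integral_eq_lintegral_ofReal (hint_stop n)
        (ae_of_all _ fun ω => hpos _ ω), hIstop n]
      simp
    have hmeas_stop : ∀ n, Measurable (stoppedValue e (fun ω => (σ n ω : WithTop ℕ))) := by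
      intro n
      have h := stronglyMeasurable_stoppedValue_of_le
        hM.stronglyAdapted.progMeasurable_of_discrete (hσ_st n)
          (fun ω => WithTop.coe_le_coe.2 (hσ_le n ω))
      exact (h.mono (ℱ.le n)).measurable
    -- pointwise a.e. inequality with liminf
    have hptwise : ∀ᵐ ω ∂μ, ENNReal.ofReal (stopVal e τ ω) ≤
        Filter.liminf (fun n => ENNReal.ofReal (stoppedValue e (fun ω => (σ n ω : WithTop ℕ)) ω)) atTop := by
      filter_upwards [hconv] with ω hω
      rcases eq_or_ne (τ ω) ⊤ with ht | ht
      · have hsv : stopVal e τ ω = ℱ.limitProcess e μ ω := by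
          rw [stopVal, dif_pos ht]
          exact hω.limsup_eq
        have hshape : (fun n => ENNReal.ofReal (stoppedValue e (fun ω => (σ n ω : WithTop ℕ)) ω)) =
            fun n => ENNReal.ofReal (e n ω) := by
          funext n
          have : stoppedValue e (fun ω => (σ n ω : WithTop ℕ)) ω = e n ω := by
            rw [stoppedValue, hσ_eq_top n ω ht]; rfl
          rw [this]
        rw [hsv, hshape]
        have h2 : Tendsto (fun n => ENNReal.ofReal (e n ω)) atTop
            (𝓝 (ENNReal.ofReal (ℱ.limitProcess e μ ω))) :=
          (ENNReal.continuous_ofReal.tendsto _).comp hω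
        exact h2.liminf_eq.ge
      · obtain ⟨k, hk⟩ := WithTop.ne_top_iff_exists.1 ht
        have hsv : stopVal e τ ω = e k ω := by
          rw [stopVal, dif_neg ht]
          congr 1
          refine (WithTop.untop_eq_iff _).mpr ?_
          exact hk.symm
        have hev : ∀ᶠ n in atTop, ENNReal.ofReal (stoppedValue e (fun ω => (σ n ω : WithTop ℕ)) ω)
            = ENNReal.ofReal (e k ω) := by
          filter_upwards [eventually_ge_atTop k] with n hn
          rw [stoppedValue, hσ_eq n ω k hk.symm hn]; rfl
        rw [hsv, liminf_congr hev, liminf_const]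
    calc ∫⁻ ω, ENNReal.ofReal (stopVal e τ ω) ∂μ
        ≤ ∫⁻ ω, Filter.liminf (fun n => ENNReal.ofReal (stoppedValue e (fun ω => (σ n ω : WithTop ℕ)) ω)) atTop ∂μ :=
          lintegral_mono_ae hptwise
      _ ≤ Filter.liminf (fun n => ∫⁻ ω, ENNReal.ofReal (stoppedValue e (fun ω => (σ n ω : WithTop ℕ)) ω) ∂μ) atTop :=
          lintegral_liminf_le fun n => (hmeas_stop n).ennreal_ofReal
      _ = 1 := by simp only [hLstop]; exact liminf_const 1
  · -- Part 2
    intro e' hadp hbound hle t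
    have hτ : IsENatStoppingTime ℱ (fun _ => (t : ℕ∞)) := by
      intro s
      by_cases h : (t : ℕ∞) ≤ (s : ℕ∞)
      · have h2 : {ω : Ω | (t : ℕ∞) ≤ (s : ℕ∞)} = Set.univ := by
          ext ω; simp [h]
        rw [h2]; exact @MeasurableSet.univ Ω (ℱ s)
      · have h2 : {ω : Ω | (t : ℕ∞) ≤ (s : ℕ∞)} = ∅ := by
          ext ω; simp [h]
        rw [h2]; exact @MeasurableSet.empty Ω (ℱ s)
    have hsv : stopVal e' (fun _ => (t : ℕ∞)) = e' t := by
      funext ω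
      rw [stopVal, dif_neg (by simp : ((t : ℕ∞) ≠ ⊤))]
      congr 1
    have hle' : ∫⁻ ω, ENNReal.ofReal (e' t ω) ∂μ ≤ 1 := by
      have h := hbound (fun _ => (t : ℕ∞)) hτ
      rwa [hsv] at h
    have hmeas' : AEMeasurable (fun ω => ENNReal.ofReal (e' t ω)) μ :=
      (((hadp t).mono (ℱ.le t) le_rfl).ennreal_ofReal).aemeasurable
    have haeq : (fun ω => ENNReal.ofReal (e t ω)) =ᵐ[μ] fun ω => ENNReal.ofReal (e' t ω) := by
      refine ae_eq_of_ae_le_of_lintegral_le ?_ ?_ hmeas' ?_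
      · filter_upwards [hle t] with ω hω
        exact ENNReal.ofReal_le_ofReal hω
      · rw [hLeq t]; exact ENNReal.one_ne_top
      · rw [hLeq t]; exact hle'
    filter_upwards [haeq, hle t] with ω h1ω h2ω
    have h0 : 0 ≤ e' t ω := le_trans (hpos t ω) h2ω
    have h3 := (ENNReal.ofReal_eq_ofReal_iff (hpos t ω) h0).1 h1ω
    linarith
end

section
/- Pointwise admissibility of e-values (necessity): if (𝔢_t)_{t∈ℕ₀} is an admissible e-value for a point null Q (i.e., E_Q[𝔢_τ] ≤ 1 for all stopping times τ, and no other process satisfying this property dominates it strictly), then (𝔢_t) is a nonnegative Q-martingale. -/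
open MeasureTheory Filter
open scoped ENNReal
open scoped NNReal Topology

lemma stopVal_eq_of_eq_coe {Ω : Type*} (f : ℕ → Ω → ℝ) (τ : Ω → ℕ∞) (ω : Ω) (k : ℕ)
    (h : τ ω = (k : ℕ∞)) : stopVal f τ ω = f k ω := by
  have hne : τ ω ≠ ⊤ := by simp [h]
  rw [stopVal, dif_neg hne]
  congr 1
  rw [WithTop.untop_eq_iff hne]
  exact_mod_cast h

lemma stopVal_eq_of_eq_top {Ω : Type*} (f : ℕ → Ω → ℝ) (τ : Ω → ℕ∞) (ω : Ω)
    (h : τ ω = ⊤) : stopVal f τ ω = Filter.limsup (fun t => f t ω) Filter.atTop := by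
  rw [stopVal, dif_pos h]

lemma isENatStoppingTime_const {Ω : Type*} {m0 : MeasurableSpace Ω} (ℱ : Filtration ℕ m0)
    (k : ℕ) : IsENatStoppingTime ℱ (fun _ => (k : ℕ∞)) := by
  intro t
  by_cases h : (k : ℕ∞) ≤ (t : ℕ∞) <;> simp [h]

/-- Pointwise admissibility of e-values (necessity): if `(𝔢_t)` is an admissible
e-value for a point null `Q` — it satisfies `E_Q[𝔢_τ] ≤ 1` at all (possibly infinite)
stopping times and no e-value dominating it differs from it — then `(𝔢_t)` is a
nonnegative `Q`-martingale. -/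
theorem admissible_e_value_is_martingale {Ω : Type*} {m0 : MeasurableSpace Ω}
    (μ : Measure Ω) [IsProbabilityMeasure μ] (ℱ : Filtration ℕ m0)
    (e : ℕ → Ω → ℝ) (hadp : Adapted ℱ e) (hpos : ∀ t ω, 0 ≤ e t ω)
    (hint : ∀ t, Integrable (e t) μ)
    (hsafe : ∀ τ : Ω → ℕ∞, IsENatStoppingTime ℱ τ →
      ∫⁻ ω, ENNReal.ofReal (stopVal e τ ω) ∂μ ≤ 1)
    (hadm : ∀ e' : ℕ → Ω → ℝ, Adapted ℱ e' → (∀ t ω, 0 ≤ e' t ω) →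
      (∀ t, Integrable (e' t) μ) →
      (∀ τ : Ω → ℕ∞, IsENatStoppingTime ℱ τ →
        ∫⁻ ω, ENNReal.ofReal (stopVal e' τ ω) ∂μ ≤ 1) →
      (∀ t, e t ≤ᵐ[μ] e' t) → ∀ t, e' t =ᵐ[μ] e t) :
    Martingale e ℱ μ := by
  classical
  -- Step 0: expectations at constant times are at most 1.
  have hEk : ∀ k : ℕ, ∫⁻ ω, ENNReal.ofReal (e k ω) ∂μ ≤ 1 := by
    intro k
    have h := hsafe (fun _ => (k : ℕ∞)) (isENatStoppingTime_const ℱ k)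
    calc ∫⁻ ω, ENNReal.ofReal (e k ω) ∂μ
        = ∫⁻ ω, ENNReal.ofReal (stopVal e (fun _ => (k : ℕ∞)) ω) ∂μ := by
          refine lintegral_congr fun ω => ?_
          rw [stopVal_eq_of_eq_coe e _ ω k rfl]
      _ ≤ 1 := h
  -- Step 1: `e` is a supermartingale.
  have hsuper : ∀ t : ℕ, μ[e (t + 1)|ℱ t] ≤ᵐ[μ] e t := by
    intro t
    set G : Ω → ℝ := μ[e (t + 1)|ℱ t] with hG
    set e' : ℕ → Ω → ℝ := fun s => if s = t then fun ω => max (e t ω) (G ω) else e s with he'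
    have he't : e' t = fun ω => max (e t ω) (G ω) := by simp [he']
    have he'ne : ∀ s, s ≠ t → e' s = e s := fun s hs => by simp [he', hs]
    have hG0 : 0 ≤ᵐ[μ] G := condExp_nonneg (Eventually.of_forall fun ω => hpos _ ω)
    have hadp' : Adapted ℱ e' := by
      intro s
      by_cases hs : s = t
      · subst hs; rw [he't]
        exact (@StronglyMeasurable.sup _ _ _ _ (ℱ s) _ _ _ (hadp s).stronglyMeasurable stronglyMeasurable_condExp).measurable
      · rw [he'ne s hs]; exact hadp s
    have hpos' : ∀ s ω, 0 ≤ e' s ω := by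
      intro s ω; by_cases hs : s = t
      · subst hs; rw [he't]; exact le_trans (hpos s ω) (le_max_left _ _)
      · rw [he'ne s hs]; exact hpos s ω
    have hint' : ∀ s, Integrable (e' s) μ := by
      intro s; by_cases hs : s = t
      · subst hs; rw [he't]; exact (hint s).sup integrable_condExp
      · rw [he'ne s hs]; exact hint s
    have hsafe' : ∀ τ : Ω → ℕ∞, IsENatStoppingTime ℱ τ →
        ∫⁻ ω, ENNReal.ofReal (stopVal e' τ ω) ∂μ ≤ 1 := by
      intro τ hτ
      set B : Set Ω := {ω | τ ω = (t : ℕ∞) ∧ e t ω < G ω} with hB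
      have hBt : MeasurableSet[ℱ t] B := by
        have h1 : MeasurableSet[ℱ t] {ω | τ ω = (t : ℕ∞)} := by
          cases t with
          | zero =>
            have : {ω | τ ω = ((0 : ℕ) : ℕ∞)} = {ω | τ ω ≤ ((0 : ℕ) : ℕ∞)} := by
              ext ω; simp [le_zero_iff]
            rw [this]; exact hτ 0
          | succ s =>
            have : {ω | τ ω = ((s + 1 : ℕ) : ℕ∞)} =
                {ω | τ ω ≤ ((s + 1 : ℕ) : ℕ∞)} \ {ω | τ ω ≤ ((s : ℕ) : ℕ∞)} := by
              ext ω
              simp only [Set.mem_setOf_eq, Set.mem_diff]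
              constructor
              · intro h
                refine ⟨le_of_eq h, ?_⟩
                rw [h]
                intro hc
                exact absurd (by exact_mod_cast hc) (by omega)
              · rintro ⟨h1, h2⟩
                rcases ENat.le_coe_iff.mp h1 with ⟨n, hn, hns⟩
                rw [hn]
                norm_cast
                by_contra hne
                exact h2 (hn ▸ (by exact_mod_cast (by omega : n ≤ s)))
            rw [this]
            exact (hτ (s + 1)).diff ((ℱ.mono (Nat.le_succ s)) _ (hτ s))
        have h4 : MeasurableSet[ℱ t] {ω | e t ω < G ω} :=
          measurableSet_lt (hadp t) stronglyMeasurable_condExp.measurable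
        exact h1.inter h4
      have hBm : MeasurableSet B := ℱ.le t _ hBt
      set τ' : Ω → ℕ∞ := fun ω => if ω ∈ B then ((t + 1 : ℕ) : ℕ∞) else τ ω with hτ'def
      have hτ' : IsENatStoppingTime ℱ τ' := by
        intro s
        by_cases hst : s = t
        · subst hst
          have hset : {ω | τ' ω ≤ (s : ℕ∞)} = {ω | τ ω ≤ (s : ℕ∞)} ∩ Bᶜ := by
            ext ω
            by_cases hb : ω ∈ B
            · have hτ'ω : τ' ω = ((s + 1 : ℕ) : ℕ∞) := if_pos hb
              simp only [Set.mem_setOf_eq, Set.mem_inter_iff, Set.mem_compl_iff, hτ'ω, hb,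
                not_true, and_false, iff_false]
              intro hc
              have : s + 1 ≤ s := by exact_mod_cast hc
              omega
            · have hτ'ω : τ' ω = τ ω := if_neg hb
              constructor
              · intro h
                have h' : τ' ω ≤ (s : ℕ∞) := h
                rw [hτ'ω] at h'
                exact ⟨h', hb⟩
              · intro h
                have h' : τ ω ≤ (s : ℕ∞) := h.1
                show τ' ω ≤ (s : ℕ∞)
                rwa [hτ'ω]
          rw [hset]; exact (hτ s).inter hBt.compl
        · have hset : {ω | τ' ω ≤ (s : ℕ∞)} = {ω | τ ω ≤ (s : ℕ∞)} := by
            ext ω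
            by_cases hb : ω ∈ B
            · have hτω : τ ω = (t : ℕ∞) := hb.1
              have hτ'ω : τ' ω = ((t + 1 : ℕ) : ℕ∞) := if_pos hb
              simp only [Set.mem_setOf_eq, hτ'ω, hτω]
              constructor
              · intro h
                have : t + 1 ≤ s := by exact_mod_cast h
                exact_mod_cast (by omega : t ≤ s)
              · intro h
                have hts : t ≤ s := by exact_mod_cast h
                have h2 : t ≠ s := fun hh => hst hh.symm
                exact_mod_cast (show t + 1 ≤ s by omega)
            · have hτ'ω : τ' ω = τ ω := if_neg hb
              constructor
              · intro h
                have h' : τ' ω ≤ (s : ℕ∞) := h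
                rwa [hτ'ω] at h'
              · intro h
                have h' : τ ω ≤ (s : ℕ∞) := h
                show τ' ω ≤ (s : ℕ∞)
                rwa [hτ'ω]
          rw [hset]; exact hτ s
      -- pointwise identities
      have fact1 : ∀ ω ∉ B, stopVal e' τ ω = stopVal e τ' ω := by
        intro ω hb
        have hτ'ω : τ' ω = τ ω := if_neg hb
        by_cases htop : τ ω = ⊤
        · rw [stopVal_eq_of_eq_top _ _ _ htop, stopVal_eq_of_eq_top _ _ _ (hτ'ω.trans htop)]
          refine Filter.limsup_congr ?_
          filter_upwards [Filter.eventually_ge_atTop (t + 1)] with s hs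
          rw [he'ne s (by omega)]
        · set k := (τ ω).toNat with hk
          have hkeq : τ ω = (k : ℕ∞) := (ENat.coe_toNat htop).symm
          rw [stopVal_eq_of_eq_coe _ _ _ k hkeq, stopVal_eq_of_eq_coe _ _ _ k (hτ'ω.trans hkeq)]
          by_cases hkt : k = t
          · subst hkt
            have hnlt : ¬ e k ω < G ω := fun hc => hb ⟨hkeq, hc⟩
            rw [he't]
            exact max_eq_left (not_lt.mp hnlt)
          · rw [he'ne k hkt]
      have fact2 : ∀ ω ∈ B, stopVal e' τ ω = G ω := by
        intro ω hb
        rw [stopVal_eq_of_eq_coe _ _ _ t hb.1, he't]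
        exact max_eq_right (le_of_lt hb.2)
      have fact3 : ∀ ω ∈ B, stopVal e τ' ω = e (t + 1) ω := by
        intro ω hb
        exact stopVal_eq_of_eq_coe _ _ _ (t + 1) (if_pos hb)
      have hBint : ∫⁻ ω in B, ENNReal.ofReal (stopVal e' τ ω) ∂μ =
          ∫⁻ ω in B, ENNReal.ofReal (stopVal e τ' ω) ∂μ := by
        calc ∫⁻ ω in B, ENNReal.ofReal (stopVal e' τ ω) ∂μ
            = ∫⁻ ω in B, ENNReal.ofReal (G ω) ∂μ :=
              setLIntegral_congr_fun hBm (fun ω hb => by rw [fact2 ω hb])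
          _ = ENNReal.ofReal (∫ ω in B, G ω ∂μ) :=
              (ofReal_integral_eq_lintegral_ofReal integrable_condExp.restrict
                (ae_restrict_of_ae hG0)).symm
          _ = ENNReal.ofReal (∫ ω in B, e (t + 1) ω ∂μ) := by
              rw [hG, setIntegral_condExp (ℱ.le t) (hint (t + 1)) hBt]
          _ = ∫⁻ ω in B, ENNReal.ofReal (e (t + 1) ω) ∂μ :=
              ofReal_integral_eq_lintegral_ofReal (hint (t + 1)).restrict
                (ae_restrict_of_ae (ae_of_all _ (hpos (t + 1))))
          _ = ∫⁻ ω in B, ENNReal.ofReal (stopVal e τ' ω) ∂μ :=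
              (setLIntegral_congr_fun hBm (fun ω hb => by rw [fact3 ω hb])).symm
      calc ∫⁻ ω, ENNReal.ofReal (stopVal e' τ ω) ∂μ
          = ∫⁻ ω in B, ENNReal.ofReal (stopVal e' τ ω) ∂μ
            + ∫⁻ ω in Bᶜ, ENNReal.ofReal (stopVal e' τ ω) ∂μ :=
            (lintegral_add_compl _ hBm).symm
        _ = ∫⁻ ω in B, ENNReal.ofReal (stopVal e τ' ω) ∂μ
            + ∫⁻ ω in Bᶜ, ENNReal.ofReal (stopVal e τ' ω) ∂μ := by
            rw [hBint]
            congr 1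
            exact setLIntegral_congr_fun hBm.compl
              (fun ω hb => by rw [fact1 ω hb])
        _ = ∫⁻ ω, ENNReal.ofReal (stopVal e τ' ω) ∂μ := lintegral_add_compl _ hBm
        _ ≤ 1 := hsafe τ' hτ'
    have hdom : ∀ s, e s ≤ᵐ[μ] e' s := by
      intro s
      by_cases hs : s = t
      · subst hs; rw [he't]
        exact Eventually.of_forall fun ω => le_max_left _ _
      · rw [he'ne s hs]
    have hfin := hadm e' hadp' hpos' hint' hsafe' hdom t
    rw [he't] at hfin
    filter_upwards [hfin] with ω hω
    exact le_of_max_le_right (le_of_eq hω)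
  -- Step 2: the Doob martingale part.
  set g : ℕ → Ω → ℝ := fun t => μ[e (t + 1)|ℱ t] with hg
  set A : ℕ → Ω → ℝ := fun n => Nat.rec (fun _ => (0 : ℝ))
    (fun t At ω => At ω + max (e t ω - g t ω) 0) n with hA
  set M : ℕ → Ω → ℝ := fun n ω => e n ω + A n ω with hM
  have hA0 : A 0 = fun _ => (0 : ℝ) := rfl
  have hAsucc : ∀ t ω, A (t + 1) ω = A t ω + max (e t ω - g t ω) 0 := fun t ω => rfl
  have hAnonneg : ∀ t ω, 0 ≤ A t ω := by
    intro t
    induction t with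
    | zero => intro ω; simp [hA0]
    | succ t ih =>
      intro ω
      have h1 : A (t + 1) ω = A t ω + max (e t ω - g t ω) 0 := hAsucc t ω
      have := ih ω
      have h2 : (0 : ℝ) ≤ max (e t ω - g t ω) 0 := le_max_right _ _
      linarith
  have hAint : ∀ t, Integrable (A t) μ := by
    intro t
    induction t with
    | zero => rw [hA0]; exact integrable_const 0
    | succ t ih =>
      have : A (t + 1) = fun ω => A t ω + max (e t ω - g t ω) 0 := rfl
      rw [this]
      exact ih.add (((hint t).sub integrable_condExp).pos_part)
  have hAmeas : ∀ t, StronglyMeasurable[ℱ t] (A (t + 1)) := by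
    intro t
    induction t with
    | zero =>
      have : A (0 + 1) = fun ω => max (e 0 ω - g 0 ω) 0 := by
        funext ω
        show A 0 ω + max (e 0 ω - g 0 ω) 0 = max (e 0 ω - g 0 ω) 0
        rw [hA0]
        simp
      rw [this]
      exact @StronglyMeasurable.sup _ _ _ _ (ℱ 0) _ _ _
        ((hadp 0).stronglyMeasurable.sub stronglyMeasurable_condExp) stronglyMeasurable_const
    | succ t ih =>
      have : A (t + 1 + 1) = fun ω => A (t + 1) ω + max (e (t + 1) ω - g (t + 1) ω) 0 := rfl
      rw [this]
      exact (ih.mono (ℱ.mono (Nat.le_succ t))).add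
        (@StronglyMeasurable.sup _ _ _ _ (ℱ (t + 1)) _ _ _
          ((hadp (t + 1)).stronglyMeasurable.sub stronglyMeasurable_condExp) stronglyMeasurable_const)
  have hAmeas' : ∀ t, StronglyMeasurable[ℱ t] (A t) := by
    intro t
    cases t with
    | zero => rw [hA0]; exact stronglyMeasurable_const
    | succ t => exact (hAmeas t).mono (ℱ.mono (Nat.le_succ t))
  have hMadp : Adapted ℱ M := fun t => (hadp t).add (hAmeas' t).measurable
  have hMint : ∀ t, Integrable (M t) μ := fun t => (hint t).add (hAint t)
  have hMpos : ∀ t ω, 0 ≤ M t ω := fun t ω => add_nonneg (hpos t ω) (hAnonneg t ω)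
  have hMmart : Martingale M ℱ μ := by
    refine martingale_nat hMadp.stronglyAdapted hMint fun t => ?_
    have hsplit : M (t + 1) = e (t + 1) + A (t + 1) := rfl
    have h1 : μ[M (t + 1)|ℱ t] =ᵐ[μ] μ[e (t + 1)|ℱ t] + μ[A (t + 1)|ℱ t] := by
      rw [hsplit]; exact condExp_add (hint (t + 1)) (hAint (t + 1)) _
    have h2 : μ[A (t + 1)|ℱ t] = A (t + 1) :=
      condExp_of_stronglyMeasurable (ℱ.le t) (hAmeas t) (hAint (t + 1))
    rw [h2] at h1
    filter_upwards [h1, hsuper t] with ω hω hsω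
    have hsω' : g t ω ≤ e t ω := hsω
    have hmax : max (e t ω - g t ω) 0 = e t ω - g t ω :=
      max_eq_left (sub_nonneg.mpr hsω')
    have h5 : A (t + 1) ω = A t ω + max (e t ω - g t ω) 0 := hAsucc t ω
    show M t ω = (μ[M (t + 1)|ℱ t]) ω
    rw [hω]
    show e t ω + A t ω = g t ω + A (t + 1) ω
    rw [h5, hmax]
    ring
  -- Step 3: `M` is safe.
  have hMsafe : ∀ τ : Ω → ℕ∞, IsENatStoppingTime ℱ τ →
      ∫⁻ ω, ENNReal.ofReal (stopVal M τ ω) ∂μ ≤ 1 := by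
    intro τ hτ
    set σ : ℕ → Ω → ℕ := fun n ω => (min (τ ω) (n : ℕ∞)).toNat with hσdef
    have hσnetop : ∀ (n : ℕ) (ω : Ω), min (τ ω) (n : ℕ∞) ≠ ⊤ := by
      intro n ω
      exact ne_top_of_le_ne_top (ENat.coe_ne_top n) (min_le_right _ _)
    have hσcoe : ∀ (n : ℕ) (ω : Ω), (σ n ω : ℕ∞) = min (τ ω) (n : ℕ∞) := fun n ω =>
      ENat.coe_toNat (hσnetop n ω)
    have hσbdd : ∀ n ω, σ n ω ≤ n := by
      intro n ω
      have := ENat.toNat_le_toNat (min_le_right (τ ω) (n : ℕ∞)) (by simp)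
      simpa using this
    set σ' : ℕ → Ω → ℕ∞ := fun n ω => (σ n ω : ℕ∞) with hσ'def
    have hsv : ∀ n ω, stoppedValue M (σ' n) ω = M (σ n ω) ω := fun n ω => rfl
    have hσbdd' : ∀ n ω, σ' n ω ≤ WithTop.some n := fun n ω => WithTop.coe_le_coe.mpr (hσbdd n ω)
    have hσ : ∀ n, IsStoppingTime ℱ (σ' n) := by
      intro n s
      show MeasurableSet[ℱ s] {ω | σ' n ω ≤ (s : ℕ∞)}
      have hcs : ∀ ω, (σ' n ω ≤ (s : ℕ∞)) ↔ σ n ω ≤ s := fun ω => Nat.cast_le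
      simp only [hcs]
      by_cases h : n ≤ s
      · have : {ω | σ n ω ≤ s} = Set.univ := by
          ext ω
          simp only [Set.mem_setOf_eq, Set.mem_univ, iff_true]
          exact le_trans (hσbdd n ω) h
        rw [this]; exact MeasurableSet.univ
      · push_neg at h
        have hset : {ω | σ n ω ≤ s} = {ω | τ ω ≤ (s : ℕ∞)} := by
          ext ω
          simp only [Set.mem_setOf_eq]
          constructor
          · intro hh
            have hmin : min (τ ω) (n : ℕ∞) ≤ (s : ℕ∞) := by
              rw [← hσcoe n ω]
              exact_mod_cast hh
            rcases min_le_iff.mp hmin with h1 | h1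
            · exact h1
            · exact absurd (by exact_mod_cast h1 : n ≤ s) (by omega)
          · intro hh
            have hmin : min (τ ω) (n : ℕ∞) ≤ (s : ℕ∞) := le_trans (min_le_left _ _) hh
            have := ENat.toNat_le_toNat hmin (by simp)
            simpa using this
        rw [hset]; exact hτ s
    -- expectation of stopped values
    have hEM : ∀ n, ∫ ω, M n ω ∂μ = ∫ ω, e 0 ω ∂μ := by
      intro n
      have h1 : ∫ ω, M 0 ω ∂μ = ∫ ω, M n ω ∂μ := by
        have h2 : μ[M n|ℱ 0] =ᵐ[μ] M 0 := hMmart.2 0 n (Nat.zero_le n)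
        have h3 : ∫ ω, (μ[M n|ℱ 0]) ω ∂μ = ∫ ω, M n ω ∂μ := integral_condExp (ℱ.le 0)
        rw [← h3]
        exact integral_congr_ae h2.symm
      rw [← h1]
      refine integral_congr_ae (Eventually.of_forall fun ω => ?_)
      show e 0 ω + A 0 ω = e 0 ω
      rw [hA0]; simp
    have hEσ : ∀ n, ∫ ω, stoppedValue M (σ' n) ω ∂μ ≤ ∫ ω, e 0 ω ∂μ := by
      intro n
      have h1 := (hMmart.neg.submartingale).expected_stoppedValue_mono
        (isStoppingTime_const ℱ 0) (hσ n) (fun ω => WithTop.coe_le_coe.mpr (Nat.zero_le _)) (hσbdd' n)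
      have e1 : stoppedValue (-M) (fun _ => WithTop.some 0) = fun ω => -(M 0 ω) := rfl
      have e2 : stoppedValue (-M) (σ' n) = fun ω => -(stoppedValue M (σ' n) ω) := rfl
      rw [e1, e2, integral_neg, integral_neg] at h1
      have h3 : ∫ ω, stoppedValue M (σ' n) ω ∂μ ≤ ∫ ω, M 0 ω ∂μ := by linarith
      calc ∫ ω, stoppedValue M (σ' n) ω ∂μ ≤ ∫ ω, M 0 ω ∂μ := h3
        _ = ∫ ω, e 0 ω ∂μ := hEM 0
    have hE0 : ENNReal.ofReal (∫ ω, e 0 ω ∂μ) ≤ 1 := by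
      rw [ofReal_integral_eq_lintegral_ofReal (hint 0) (ae_of_all _ (hpos 0))]
      exact hEk 0
    have hSVmeas : ∀ n, Measurable fun ω => ENNReal.ofReal (stoppedValue M (σ' n) ω) := by
      intro n
      have h1 : StronglyMeasurable[ℱ n] (stoppedValue M (σ' n)) :=
        stronglyMeasurable_stoppedValue_of_le hMadp.stronglyAdapted.progMeasurable_of_discrete (hσ n)
          (hσbdd' n)
      exact ENNReal.measurable_ofReal.comp ((h1.mono (ℱ.le n)).measurable)
    have hSVint : ∀ n, Integrable (stoppedValue M (σ' n)) μ :=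
      fun n => hMmart.submartingale.integrable_stoppedValue (hσ n) (hσbdd' n)
    have hSVle : ∀ n, ∫⁻ ω, ENNReal.ofReal (stoppedValue M (σ' n) ω) ∂μ ≤ 1 := by
      intro n
      rw [← ofReal_integral_eq_lintegral_ofReal (hSVint n)
        (ae_of_all _ fun ω => hMpos _ ω)]
      exact le_trans (ENNReal.ofReal_le_ofReal (hEσ n)) hE0
    -- a.e. convergence of M
    have hbdd : ∀ n, eLpNorm (M n) 1 μ ≤ ((1 : NNReal) : ℝ≥0∞) := by
      intro n
      rw [eLpNorm_one_eq_lintegral_enorm]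
      have : ∀ ω, ‖M n ω‖ₑ = ENNReal.ofReal (M n ω) := fun ω =>
        Real.enorm_eq_ofReal (hMpos n ω)
      rw [lintegral_congr this,
        ← ofReal_integral_eq_lintegral_ofReal (hMint n) (ae_of_all _ fun ω => hMpos n ω),
        hEM n]
      simpa using hE0
    have hconv : ∀ᵐ ω ∂μ, ∃ c, Tendsto (fun n => M n ω) atTop (𝓝 c) :=
      hMmart.submartingale.exists_ae_tendsto_of_bdd hbdd
    have key : ∀ᵐ ω ∂μ, ENNReal.ofReal (stopVal M τ ω) =
        liminf (fun n => ENNReal.ofReal (stoppedValue M (σ' n) ω)) atTop := by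
      filter_upwards [hconv] with ω hc
      obtain ⟨c, hc⟩ := hc
      by_cases htop : τ ω = ⊤
      · have hσω : ∀ n, σ n ω = n := by
          intro n
          simp [hσdef, htop]
        rw [stopVal_eq_of_eq_top _ _ _ htop, hc.limsup_eq]
        have ht2 : Tendsto (fun n => ENNReal.ofReal (stoppedValue M (σ' n) ω)) atTop
            (𝓝 (ENNReal.ofReal c)) := by
          have : (fun n => ENNReal.ofReal (stoppedValue M (σ' n) ω))
              = fun n => ENNReal.ofReal (M n ω) := by
            funext n; rw [hsv, hσω n]
          rw [this]
          exact (ENNReal.continuous_ofReal.tendsto c).comp hc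
        exact ht2.liminf_eq.symm
      · set k := (τ ω).toNat with hk
        have hkeq : τ ω = (k : ℕ∞) := (ENat.coe_toNat htop).symm
        rw [stopVal_eq_of_eq_coe _ _ _ k hkeq]
        have hev : ∀ n ≥ k, stoppedValue M (σ' n) ω = M k ω := by
          intro n hn
          have hσω : σ n ω = k := by
            have : min (τ ω) (n : ℕ∞) = (k : ℕ∞) := by
              rw [hkeq]
              exact min_eq_left (by exact_mod_cast hn)
            rw [hσdef]
            simp [this]
          rw [hsv, hσω]
        have ht2 : Tendsto (fun n => ENNReal.ofReal (stoppedValue M (σ' n) ω)) atTop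
            (𝓝 (ENNReal.ofReal (M k ω))) := by
          refine Tendsto.congr' ?_ tendsto_const_nhds
          filter_upwards [Filter.eventually_ge_atTop k] with n hn
          rw [hev n hn]
        exact ht2.liminf_eq.symm
    calc ∫⁻ ω, ENNReal.ofReal (stopVal M τ ω) ∂μ
        = ∫⁻ ω, liminf (fun n => ENNReal.ofReal (stoppedValue M (σ' n) ω)) atTop ∂μ :=
          lintegral_congr_ae key
      _ ≤ liminf (fun n => ∫⁻ ω, ENNReal.ofReal (stoppedValue M (σ' n) ω) ∂μ) atTop :=
          lintegral_liminf_le hSVmeas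
      _ ≤ 1 := by
          have h1 : liminf (fun n => ∫⁻ ω, ENNReal.ofReal (stoppedValue M (σ' n) ω) ∂μ)
              atTop ≤ liminf (fun _ : ℕ => (1 : ℝ≥0∞)) atTop :=
            Filter.liminf_le_liminf (Eventually.of_forall hSVle)
          simpa using h1
  have hMdom : ∀ t, e t ≤ᵐ[μ] M t := fun t =>
    Eventually.of_forall fun ω => le_add_of_nonneg_right (hAnonneg t ω)
  have heM : ∀ t, M t =ᵐ[μ] e t := hadm M hMadp hMpos hMint hMsafe hMdom
  refine martingale_nat hadp.stronglyAdapted hint fun t => ?_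
  calc e t =ᵐ[μ] M t := (heM t).symm
    _ =ᵐ[μ] μ[M (t + 1)|ℱ t] := (hMmart.2 t (t + 1) (Nat.le_succ t)).symm
    _ =ᵐ[μ] μ[e (t + 1)|ℱ t] := condExp_congr_ae (heM (t + 1))
end
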